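/- arXiv:2103.07749 — 7 statements merged into one kernel-verified Lean document; each statement's English description precedes it below -/
import Mathlib

section
/- Sphere-packing bound for the overweight distance: Let R be a finite ring with identity and let C ⊆ R^n be a (not necessarily linear) nonempty code of length n whose minimum overweight distance d = min{ D(x,y) : x,y ∈ C, x ≠ y } satisfies d = 2e + 1 for a nonnegative integer e. Then |C| ≤ |R|^n / |B_{e,D}(0)|, where B_{e,D}(0) is the overweight ball of radius e around 0 in R^n. -/
open Classical in
noncomputable def overweight {R : Type*} [Ring R] (x : R) : ℝ :=
  if x = 0 then 0 else if IsUnit x then 1 else 2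

noncomputable def overweightN {R : Type*} [Ring R] {n : ℕ} (x : Fin n → R) : ℝ :=
  ∑ i, overweight (x i)

noncomputable def owDist {R : Type*} [Ring R] {n : ℕ} (x y : Fin n → R) : ℝ :=
  overweightN (x - y)

def owBall {R : Type*} [Ring R] {n : ℕ} (r : ℝ) (x : Fin n → R) : Set (Fin n → R) :=
  {y : Fin n → R | owDist x y ≤ r}

lemma ow_nonneg {R : Type*} [Ring R] (x : R) : 0 ≤ overweight x := by
  unfold overweight; split_ifs <;> norm_num

lemma ow_le_two {R : Type*} [Ring R] (x : R) : overweight x ≤ 2 := by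
  unfold overweight; split_ifs <;> norm_num

lemma ow_zero {R : Type*} [Ring R] : overweight (0 : R) = 0 := by
  simp [overweight]

lemma ow_neg {R : Type*} [Ring R] (x : R) : overweight (-x) = overweight x := by
  unfold overweight
  rw [neg_eq_zero]
  by_cases h : x = 0
  · simp [h]
  · have hu : IsUnit (-x) ↔ IsUnit x := ⟨fun h' => by simpa using h'.neg, fun h' => h'.neg⟩
    classical
    simp only [h, if_false]
    by_cases h2 : IsUnit x
    · rw [if_pos (hu.mpr h2), if_pos h2]
    · rw [if_neg (fun h3 => h2 (hu.mp h3)), if_neg h2]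

lemma ow_one_le {R : Type*} [Ring R] {x : R} (hx : x ≠ 0) : 1 ≤ overweight x := by
  unfold overweight; split_ifs <;> norm_num; exact hx ‹_›

lemma ow_triangle {R : Type*} [Ring R] (x y : R) :
    overweight (x + y) ≤ overweight x + overweight y := by
  by_cases hx : x = 0
  · simp [hx, ow_zero]
  by_cases hy : y = 0
  · simp [hy, ow_zero]
  calc overweight (x + y) ≤ 2 := ow_le_two _
    _ = 1 + 1 := by norm_num
    _ ≤ overweight x + overweight y := add_le_add (ow_one_le hx) (ow_one_le hy)

lemma owN_neg {R : Type*} [Ring R] {n : ℕ} (x : Fin n → R) :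
    overweightN (-x) = overweightN x := by
  unfold overweightN
  exact Finset.sum_congr rfl fun i _ => ow_neg _

lemma owN_nonneg {R : Type*} [Ring R] {n : ℕ} (x : Fin n → R) :
    0 ≤ overweightN x :=
  Finset.sum_nonneg fun i _ => ow_nonneg _

lemma owN_triangle {R : Type*} [Ring R] {n : ℕ} (x y : Fin n → R) :
    overweightN (x + y) ≤ overweightN x + overweightN y := by
  unfold overweightN
  rw [← Finset.sum_add_distrib]
  exact Finset.sum_le_sum fun i _ => ow_triangle _ _

lemma owDist_symm {R : Type*} [Ring R] {n : ℕ} (x y : Fin n → R) :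
    owDist x y = owDist y x := by
  unfold owDist
  rw [← owN_neg (x - y), neg_sub]

lemma owDist_triangle {R : Type*} [Ring R] {n : ℕ} (x y z : Fin n → R) :
    owDist x z ≤ owDist x y + owDist y z := by
  unfold owDist
  have : x - z = (x - y) + (y - z) := by abel
  rw [this]
  exact owN_triangle _ _

/-- Sphere-packing bound for the overweight distance: if a (not necessarily
linear) code `C ⊆ R^n` has minimum overweight distance `d = 2e + 1`, then
`|C| ≤ |R|^n / |B_{e,D}(0)|`. -/
theorem sphere_packing_overweight {R : Type*} [Ring R] [Fintype R] {n : ℕ}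
    (C : Set (Fin n → R)) (e : ℕ) (d : ℝ) (hde : d = 2 * e + 1)
    (hmin : ∀ x ∈ C, ∀ y ∈ C, x ≠ y → d ≤ owDist x y)
    (hex : ∃ x ∈ C, ∃ y ∈ C, x ≠ y ∧ owDist x y = d) :
    (C.ncard : ℝ) ≤ (Fintype.card R : ℝ) ^ n /
      ((owBall (e : ℝ) (0 : Fin n → R)).ncard : ℝ) := by
  classical
  have hC : C.Finite := Set.toFinite C
  set s : Finset (Fin n → R) := hC.toFinset with hs
  set Bf : (Fin n → R) → Finset (Fin n → R) :=
    fun c => Finset.univ.filter (fun y => owDist c y ≤ (e : ℝ)) with hBf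
  -- each ball has the same cardinality as the ball around 0
  have hcard : ∀ c : Fin n → R, (Bf c).card = (Bf 0).card := by
    intro c
    apply Finset.card_bij (fun y _ => y - c)
    · intro y hy
      simp only [hBf, Finset.mem_filter, Finset.mem_univ, true_and] at hy ⊢
      have h0 : (0 : Fin n → R) - (y - c) = c - y := by abel
      unfold owDist
      rw [h0]
      exact hy
    · intro a ha b hb hab
      exact sub_left_injective hab
    · intro b hb
      refine ⟨b + c, ?_, by abel⟩
      simp only [hBf, Finset.mem_filter, Finset.mem_univ, true_and] at hb ⊢
      have h0 : c - (b + c) = (0 : Fin n → R) - b := by abel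
      unfold owDist
      rw [h0]
      exact hb
  -- balls around distinct codewords are disjoint
  have hdisj : ∀ c ∈ s, ∀ c' ∈ s, c ≠ c' → Disjoint (Bf c) (Bf c') := by
    intro c hc c' hc' hne
    rw [Finset.disjoint_left]
    intro y hy hy'
    simp only [hBf, Finset.mem_filter, Finset.mem_univ, true_and] at hy hy'
    have h1 : owDist c c' ≤ owDist c y + owDist y c' := owDist_triangle _ _ _
    rw [owDist_symm y c'] at h1
    have hc2 : c ∈ C := (Set.Finite.mem_toFinset hC).mp hc
    have hc'2 : c' ∈ C := (Set.Finite.mem_toFinset hC).mp hc'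
    have := hmin c hc2 c' hc'2 hne
    rw [hde] at this
    linarith
  -- counting
  have hcount : s.card * (Bf 0).card ≤ Fintype.card R ^ n := by
    calc s.card * (Bf 0).card = ∑ c ∈ s, (Bf c).card := by
          rw [Finset.sum_congr rfl fun c _ => hcard c, Finset.sum_const, smul_eq_mul]
      _ = (s.biUnion Bf).card := (Finset.card_biUnion hdisj).symm
      _ ≤ (Finset.univ : Finset (Fin n → R)).card :=
          Finset.card_le_card (Finset.subset_univ _)
      _ = Fintype.card R ^ n := by simp [Fintype.card_pi]
  -- 0 is in the ball around 0
  have hb0 : (0 : Fin n → R) ∈ Bf 0 := by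
    simp only [hBf, Finset.mem_filter, Finset.mem_univ, true_and]
    unfold owDist
    have h0 : (0 : Fin n → R) - 0 = 0 := by abel
    rw [h0]
    have h1 : overweightN (0 : Fin n → R) = 0 := by
      unfold overweightN
      simp [ow_zero]
    rw [h1]
    positivity
  have hbpos : 0 < (Bf 0).card := Finset.card_pos.mpr ⟨0, hb0⟩
  have hCn : C.ncard = s.card := Set.ncard_eq_toFinset_card C hC
  have hBn : (owBall (e : ℝ) (0 : Fin n → R)).ncard = (Bf 0).card := by
    have h : owBall (e : ℝ) (0 : Fin n → R) = ↑(Bf 0) := by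
      ext y
      simp [owBall, hBf]
    rw [h, Set.ncard_coe_finset]
  rw [hCn, hBn, le_div_iff₀ (by exact_mod_cast hbpos)]
  calc (s.card : ℝ) * (Bf 0).card = ((s.card * (Bf 0).card : ℕ) : ℝ) := by push_cast; ring
    _ ≤ ((Fintype.card R ^ n : ℕ) : ℝ) := by exact_mod_cast hcount
    _ = (Fintype.card R : ℝ) ^ n := by push_cast; ring
end

section
/- Let R be a finite local ring with maximal ideal J and assume |J| ≥ 2. Then W̄(J) ≥ W̄(I) for every left or right ideal I ⊆ R, where W̄ denotes the average overweight; i.e., among all one-sided ideals of R, the maximal ideal J maximizes the average overweight. -/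
noncomputable def avgOverweight {R : Type*} [Ring R] [Fintype R] (A : Set R) : ℝ :=
  (∑ a ∈ A.toFinite.toFinset, overweight a) / (A.ncard : ℝ)

lemma sum_overweight_of_subset_nonunits {R : Type*} [Ring R] [Fintype R]
    {S : Set R} (hS : S ⊆ nonunits R) (h0 : (0 : R) ∈ S) :
    ∑ a ∈ S.toFinite.toFinset, overweight a = 2 * (S.ncard : ℝ) - 2 := by
  classical
  have h0F : (0 : R) ∈ S.toFinite.toFinset := S.toFinite.mem_toFinset.mpr h0
  have hcard : (S.toFinite.toFinset).card = S.ncard :=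
    (Set.ncard_eq_toFinset_card S S.toFinite).symm
  rw [← Finset.sum_erase_add _ _ h0F]
  have h2 : ∀ a ∈ (S.toFinite.toFinset).erase 0, overweight a = 2 := by
    intro a ha
    have hne : a ≠ 0 := (Finset.mem_erase.mp ha).1
    have haS : a ∈ S := S.toFinite.mem_toFinset.mp (Finset.mem_erase.mp ha).2
    have hnu : ¬ IsUnit a := hS haS
    simp [overweight, hne, hnu]
  rw [Finset.sum_congr rfl h2, Finset.sum_const, Finset.card_erase_of_mem h0F]
  have h1 : 1 ≤ (S.toFinite.toFinset).card := Finset.card_pos.mpr ⟨0, h0F⟩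
  have h1' : 1 ≤ S.ncard := hcard ▸ h1
  simp only [overweight, if_pos rfl, nsmul_eq_mul, add_zero]
  rw [hcard, Nat.cast_sub h1']
  push_cast
  ring

/-- In a finite local ring `R` whose maximal ideal `J = nonunits R` has at least
two elements, the maximal ideal maximizes the average overweight among all left
or right ideals `I` of `R`. -/
theorem avgOverweight_maximalIdeal_max {R : Type*} [Ring R] [Fintype R]
    [IsLocalRing R] (hJ : 2 ≤ (nonunits R).ncard)
    (I : Set R) (h0 : (0 : R) ∈ I)
    (hadd : ∀ x ∈ I, ∀ y ∈ I, x + y ∈ I)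
    (hmul : (∀ r : R, ∀ x ∈ I, r * x ∈ I) ∨ (∀ r : R, ∀ x ∈ I, x * r ∈ I)) :
    avgOverweight I ≤ avgOverweight (nonunits R) := by
  classical
  set m := (nonunits R).ncard with hm
  have h0J : (0 : R) ∈ nonunits R := zero_mem_nonunits.mpr zero_ne_one
  have hmpos : (0 : ℝ) < (m : ℝ) := by
    have : 0 < m := lt_of_lt_of_le (by norm_num) hJ
    exact_mod_cast this
  have hm2 : (2 : ℝ) ≤ (m : ℝ) := by exact_mod_cast hJ
  have havgJ : avgOverweight (nonunits R) = (2 * (m : ℝ) - 2) / m := by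
    unfold avgOverweight
    rw [sum_overweight_of_subset_nonunits (le_refl _) h0J]
  rw [havgJ]
  by_cases hu : ∃ u ∈ I, IsUnit u
  · -- I = R
    obtain ⟨u, huI, hu⟩ := hu
    obtain ⟨v, rfl⟩ := hu
    have hIuniv : I = Set.univ := by
      ext r
      simp only [Set.mem_univ, iff_true]
      rcases hmul with hl | hr
      · have := hl (r * ↑v⁻¹) _ huI
        simpa [Units.inv_mul_cancel_right] using this
      · have := hr (↑v⁻¹ * r) _ huI
        simpa [Units.mul_inv_cancel_left] using this
    subst hIuniv
    set n := Fintype.card R with hn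
    have hmn : m ≤ n := by
      have := Set.ncard_le_ncard (Set.subset_univ (nonunits R)) Set.finite_univ
      simpa [Set.ncard_univ, Nat.card_eq_fintype_card] using this
    have hnpos : (0 : ℝ) < (n : ℝ) := by
      have : 0 < n := Fintype.card_pos
      exact_mod_cast this
    have hunits : (Finset.univ.filter (fun a : R => IsUnit a)).card = n - m := by
      have hmeq : m = (Finset.univ.filter (fun a : R => ¬ IsUnit a)).card := by
        rw [hm, Set.ncard_eq_toFinset_card (nonunits R) (Set.toFinite _)]
        congr 1
        ext a
        simp [Set.Finite.mem_toFinset, nonunits, mem_nonunits_iff]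
      have hsplit := Finset.card_filter_add_card_filter_not
        (s := (Finset.univ : Finset R)) (p := fun a : R => IsUnit a)
      simp only [Finset.card_univ] at hsplit
      omega
    have hsumR : ∑ a ∈ (Set.univ : Set R).toFinite.toFinset, overweight a
        = (n : ℝ) + m - 2 := by
      have hT : (Set.univ : Set R).toFinite.toFinset = Finset.univ := by
        simp
      rw [hT]
      have hpt : ∀ a : R, overweight a
          = 2 - (if a = 0 then 2 else 0) - (if IsUnit a then 1 else 0) := by
        intro a
        by_cases ha : a = 0
        · subst ha; simp [overweight, not_isUnit_zero]
        · by_cases hua : IsUnit a <;> simp [overweight, ha, hua] <;> norm_num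
      rw [Finset.sum_congr rfl (fun a _ => hpt a)]
      rw [Finset.sum_sub_distrib, Finset.sum_sub_distrib, Finset.sum_const,
        Finset.sum_boole]
      have h1 : ∑ a : R, (if a = 0 then (2 : ℝ) else 0) = 2 := by
        simp
      rw [h1, hunits, Nat.cast_sub hmn]
      simp only [Finset.card_univ, nsmul_eq_mul, ← hn]
      ring
    unfold avgOverweight
    rw [hsumR]
    have hncard : ((Set.univ : Set R).ncard : ℝ) = (n : ℝ) := by
      rw [Set.ncard_univ, Nat.card_eq_fintype_card]
    rw [hncard]
    rw [div_le_div_iff₀ hnpos hmpos]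
    have hmn' : (m : ℝ) ≤ n := by exact_mod_cast hmn
    nlinarith [mul_nonneg (sub_nonneg.mpr hm2) (sub_nonneg.mpr hmn')]
  · -- I ⊆ nonunits R
    have hsub : I ⊆ nonunits R := fun x hx hxu => hu ⟨x, hx, hxu⟩
    set k := I.ncard with hk
    have hk1 : 1 ≤ k := by
      have := (Set.ncard_pos (I.toFinite)).mpr ⟨0, h0⟩
      omega
    have hkm : k ≤ m := Set.ncard_le_ncard hsub (Set.toFinite _)
    have hkpos : (0 : ℝ) < (k : ℝ) := by exact_mod_cast hk1
    have hkm' : (k : ℝ) ≤ m := by exact_mod_cast hkm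
    unfold avgOverweight
    rw [sum_overweight_of_subset_nonunits hsub h0, ← hk]
    rw [div_le_div_iff₀ hkpos hmpos]
    nlinarith
end

section
/- Let R be a finite local ring with maximal ideal J satisfying |J| ≥ 2, and set η = 2(1 - 1/|J|). Let P be a probability distribution on R. Then Σ_{x ∈ R} Σ_{y ∈ R} W(x - y) P(x) P(y) ≤ η, where W is the overweight on R. -/
/-- Let `R` be a finite local ring whose maximal ideal `J = nonunits R` has at
least two elements, and set `η = 2(1 - 1/|J|)`. For every probability
distribution `P` on `R` we have `∑_{x ∈ R} ∑_{y ∈ R} W(x-y) P(x) P(y) ≤ η`. -/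
theorem overweight_prob_bound {R : Type*} [Ring R] [Fintype R] [IsLocalRing R]
    (hJ : 2 ≤ (nonunits R).ncard) (η : ℝ)
    (hη : η = 2 * (1 - 1 / ((nonunits R).ncard : ℝ)))
    (P : R → ℝ) (hP0 : ∀ x : R, 0 ≤ P x) (hP1 : ∑ x : R, P x = 1) :
    ∑ x : R, ∑ y : R, overweight (x - y) * P x * P y ≤ η := by
  classical
  set m : ℝ := ((nonunits R).ncard : ℝ) with hmdef
  have hm2 : (2:ℝ) ≤ m := by rw [hmdef]; exact_mod_cast hJ
  have hm0 : (0:ℝ) < m := by linarith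
  -- each x has exactly |J| partners y with x - y a nonunit
  have hcard : ∀ x : R,
      ((Finset.univ.filter (fun y : R => ¬ IsUnit (x - y))).card : ℝ) = m := by
    intro x
    have himg : Finset.univ.filter (fun y : R => ¬ IsUnit (x - y))
        = Finset.image (fun z : R => x - z) (nonunits R).toFinset := by
      ext y
      simp only [Finset.mem_filter, Finset.mem_univ, true_and, Finset.mem_image,
        Set.mem_toFinset, mem_nonunits_iff]
      constructor
      · intro h; exact ⟨x - y, h, sub_sub_cancel x y⟩
      · rintro ⟨z, hz, rfl⟩; simpa using hz
    rw [himg, Finset.card_image_of_injective _ sub_right_injective,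
      hmdef, Set.ncard_eq_toFinset_card']
  set D : ℝ := ∑ x : R, P x * P x with hD
  set T : ℝ := ∑ x : R, ∑ y : R, (if ¬ IsUnit (x - y) then P x * P y else 0) with hT
  have hD0 : 0 ≤ D := Finset.sum_nonneg fun x _ => mul_nonneg (hP0 x) (hP0 x)
  -- the double sum equals 1 + T - 2 D
  have hsum : ∑ x : R, ∑ y : R, overweight (x - y) * P x * P y = 1 + T - 2 * D := by
    have key : ∀ x y : R, overweight (x - y) * P x * P y
        = P x * P y + (if ¬ IsUnit (x - y) then P x * P y else 0)
          - 2 * (if x = y then P x * P y else 0) := by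
      intro x y
      unfold overweight
      by_cases h0 : x - y = 0
      · have hxy : x = y := sub_eq_zero.mp h0
        have hnu : ¬ IsUnit (x - y) := by rw [h0]; exact not_isUnit_zero
        simp [h0, hxy, hnu]
        try ring
      · have hxy : ¬ x = y := fun h => h0 (by rw [h, sub_self])
        by_cases hu : IsUnit (x - y)
        · simp [h0, hu, hxy]
          try ring
        · simp [h0, hu, hxy]
          try ring
    calc ∑ x : R, ∑ y : R, overweight (x - y) * P x * P y
        = ∑ x : R, ∑ y : R, (P x * P y + (if ¬ IsUnit (x - y) then P x * P y else 0)
            - 2 * (if x = y then P x * P y else 0)) := by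
          refine Finset.sum_congr rfl fun x _ => Finset.sum_congr rfl fun y _ => key x y
      _ = (∑ x : R, ∑ y : R, P x * P y) + T
            - 2 * ∑ x : R, ∑ y : R, (if x = y then P x * P y else 0) := by
          rw [hT]
          simp only [Finset.sum_sub_distrib, Finset.sum_add_distrib, ← Finset.mul_sum]
      _ = 1 + T - 2 * D := by
          have h1 : ∑ x : R, ∑ y : R, P x * P y = 1 := by
            simp only [← Finset.mul_sum, hP1, mul_one]
            try exact hP1
          have h2 : ∑ x : R, ∑ y : R, (if x = y then P x * P y else 0) = D := by
            rw [hD]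
            refine Finset.sum_congr rfl fun x _ => ?_
            simp [Finset.sum_ite_eq]
          rw [h1, h2]
  have hT0 : 0 ≤ T := by
    refine Finset.sum_nonneg fun x _ => Finset.sum_nonneg fun y _ => ?_
    split_ifs
    all_goals first | exact mul_nonneg (hP0 x) (hP0 y) | exact le_rfl
  have hT1 : T ≤ 1 := by
    rw [hT]
    have : ∑ x : R, ∑ y : R, (if ¬ IsUnit (x - y) then P x * P y else 0)
        ≤ ∑ x : R, ∑ y : R, P x * P y := by
      refine Finset.sum_le_sum fun x _ => Finset.sum_le_sum fun y _ => ?_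
      split_ifs <;> first
        | exact le_refl (P x * P y)
        | exact mul_nonneg (hP0 x) (hP0 y)
    calc ∑ x : R, ∑ y : R, (if ¬ IsUnit (x - y) then P x * P y else 0)
        ≤ ∑ x : R, ∑ y : R, P x * P y := this
      _ = 1 := by
          simp only [← Finset.mul_sum, hP1, mul_one]
          try exact hP1
  have hA : ∑ x : R, ∑ y : R, (if ¬ IsUnit (x - y) then P x * P x else 0) = m * D := by
    have : ∀ x : R, ∑ y : R, (if ¬ IsUnit (x - y) then P x * P x else 0)
        = m * (P x * P x) := by
      intro x
      rw [← Finset.sum_filter, Finset.sum_const, nsmul_eq_mul, hcard x]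
    rw [Finset.sum_congr rfl (fun x _ => this x), ← Finset.mul_sum, hD]
  have hB : ∑ x : R, ∑ y : R, (if ¬ IsUnit (x - y) then P y * P y else 0) = m * D := by
    rw [Finset.sum_comm]
    have : ∀ y : R, ∑ x : R, (if ¬ IsUnit (x - y) then P y * P y else 0)
        = m * (P y * P y) := by
      intro y
      have hiff : ∀ x : R, (¬ IsUnit (x - y)) ↔ (¬ IsUnit (y - x)) := by
        intro x
        rw [← neg_sub y x, IsUnit.neg_iff]
      calc ∑ x : R, (if ¬ IsUnit (x - y) then P y * P y else 0)
          = ∑ x : R, (if ¬ IsUnit (y - x) then P y * P y else 0) :=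
            Finset.sum_congr rfl fun x _ => by rw [if_congr (hiff x) rfl rfl]
        _ = m * (P y * P y) := by
            rw [← Finset.sum_filter, Finset.sum_const, nsmul_eq_mul, hcard y]
    rw [Finset.sum_congr rfl (fun y _ => this y), ← Finset.mul_sum, hD]
  have hTD : T ≤ m * D := by
    have step : T ≤ ∑ x : R, ∑ y : R,
        ((if ¬ IsUnit (x - y) then P x * P x else 0) / 2
          + (if ¬ IsUnit (x - y) then P y * P y else 0) / 2) := by
      rw [hT]
      refine Finset.sum_le_sum fun x _ => Finset.sum_le_sum fun y _ => ?_
      split_ifs with h <;>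
        nlinarith [mul_self_nonneg (P x - P y), mul_nonneg (hP0 x) (hP0 y)]
    have eq2 : ∑ x : R, ∑ y : R,
        ((if ¬ IsUnit (x - y) then P x * P x else 0) / 2
          + (if ¬ IsUnit (x - y) then P y * P y else 0) / 2) = m * D := by
      simp only [Finset.sum_add_distrib, ← Finset.sum_div]
      rw [hA, hB]
      ring
    linarith [step, eq2.le, eq2.ge]
  rw [hsum, hη]
  have hkey : m * (2 * (1 - 1 / m)) = 2 * m - 2 := by
    field_simp
  have h3 : 0 ≤ (m - 2) * (1 - T) := mul_nonneg (by linarith) (by linarith)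
  have hmain : m * (1 + T - 2 * D) ≤ 2 * m - 2 := by nlinarith [hTD, h3]
  nlinarith [hmain, hkey, hm0]
end

section
/- Let R be a finite local ring with maximal ideal J satisfying |J| ≥ 2, set η = 2(1 - 1/|J|), and let C ⊆ R^n be a (not necessarily linear) code of minimum overweight distance d. Then |C|(|C| - 1) d ≤ Σ_{x ∈ C} Σ_{y ∈ C} D(x,y) ≤ |C|^2 n η, where D denotes the overweight distance on R^n. -/
open Finset
open scoped Classical

lemma my_nonunits_add {R : Type*} [Ring R] [IsLocalRing R] {a b : R}
    (ha : ¬ IsUnit a) (hb : ¬ IsUnit b) : ¬ IsUnit (a + b) := by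
  rintro ⟨u, hu⟩
  have h1 : (↑u⁻¹ * a) + (↑u⁻¹ * b) = 1 := by
    rw [← mul_add, ← hu, Units.inv_mul]
  rcases IsLocalRing.isUnit_or_isUnit_of_add_one h1 with h | h
  · exact ha (by simpa [← mul_assoc, Units.mul_inv, one_mul] using u.isUnit.mul h)
  · exact hb (by simpa [← mul_assoc, Units.mul_inv, one_mul] using u.isUnit.mul h)

lemma isUnit_sub_comm {R : Type*} [Ring R] {a b : R} (h : IsUnit (a - b)) :
    IsUnit (b - a) := by simpa using h.neg

def owSetoid (R : Type*) [Ring R] [IsLocalRing R] : Setoid R where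
  r a b := ¬ IsUnit (a - b)
  iseqv := by
    refine ⟨fun a => by simp, fun {a b} h hu => h (isUnit_sub_comm hu),
      fun {a b c} hab hbc hu => ?_⟩
    have h : a - c = (a - b) + (b - c) := by abel
    rw [h] at hu
    exact my_nonunits_add hab hbc hu

lemma owSetoid_mk_eq {R : Type*} [Ring R] [IsLocalRing R] {a b : R} :
    Quotient.mk (owSetoid R) a = Quotient.mk (owSetoid R) b ↔ ¬ IsUnit (a - b) :=
  ⟨fun h => Quotient.exact h, fun h => Quotient.sound h⟩

lemma ow_fiber_card {R : Type*} [Ring R] [Fintype R] [IsLocalRing R]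
    (t : Quotient (owSetoid R)) :
    (Finset.univ.filter fun a => Quotient.mk (owSetoid R) a = t).card
      = (nonunits R).ncard := by
  classical
  obtain ⟨b, rfl⟩ := Quotient.exists_rep t
  rw [Set.ncard_eq_toFinset_card' (nonunits R)]
  apply Finset.card_bij (fun a _ => a - b)
  · intro a ha
    rw [Set.mem_toFinset, mem_nonunits_iff]
    exact owSetoid_mk_eq.1 (mem_filter.1 ha).2
  · intro a₁ _ a₂ _ h
    exact sub_left_injective h
  · intro u hu
    refine ⟨u + b, ?_, by abel⟩
    rw [mem_filter]
    refine ⟨mem_univ _, owSetoid_mk_eq.2 ?_⟩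
    simpa using (Set.mem_toFinset.1 hu)

lemma ow_eq {R : Type*} [Ring R] [Nontrivial R] (u : R) :
    overweight u = 2 - (if IsUnit u then (1:ℝ) else 0)
      - 2 * (if u = 0 then (1:ℝ) else 0) := by
  by_cases h0 : u = 0
  · subst h0; simp [overweight, not_isUnit_zero]
  · by_cases h1 : IsUnit u <;> simp [overweight, h0, h1] <;> norm_num

lemma ow_key {R : Type*} [Ring R] [Fintype R] [IsLocalRing R]
    (hJ : 2 ≤ (nonunits R).ncard) {α : Type*} (C : Finset α) (f : α → R) :
    ∑ x ∈ C, ∑ y ∈ C, overweight (f x - f y) ≤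
      (C.card : ℝ) ^ 2 * (2 * (1 - 1 / ((nonunits R).ncard : ℝ))) := by
  classical
  haveI : Fintype (Quotient (owSetoid R)) := Fintype.ofFinite _
  set q : ℝ := ((nonunits R).ncard : ℝ) with hqdef
  have hq2 : (2:ℝ) ≤ q := by rw [hqdef]; exact_mod_cast hJ
  have hq0 : (0:ℝ) < q := by linarith
  set m : ℝ := (C.card : ℝ) with hm
  set c : R → ℝ := fun a => ((C.filter fun x => f x = a).card : ℝ) with hc
  set M : Quotient (owSetoid R) → ℝ :=
    fun t => ((C.filter fun x => Quotient.mk (owSetoid R) (f x) = t).card : ℝ) with hM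
  set E : ℝ := ∑ x ∈ C, c (f x) with hE
  set N : ℝ := ∑ x ∈ C, M (Quotient.mk (owSetoid R) (f x)) with hN
  -- inner sums
  have inner : ∀ x ∈ C, ∑ y ∈ C, overweight (f x - f y)
      = 2 * m - (m - M (Quotient.mk (owSetoid R) (f x))) - 2 * c (f x) := by
    intro x hx
    have h1 : ∀ y ∈ C, overweight (f x - f y)
        = 2 - (1 - (if Quotient.mk (owSetoid R) (f y) = Quotient.mk (owSetoid R) (f x)
            then (1:ℝ) else 0))
          - 2 * (if f y = f x then (1:ℝ) else 0) := by
      intro y hy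
      rw [ow_eq]
      by_cases h : IsUnit (f x - f y)
      · have h2 : ¬ (Quotient.mk (owSetoid R) (f y) = Quotient.mk (owSetoid R) (f x)) :=
          fun hcon => (owSetoid_mk_eq.1 hcon) (isUnit_sub_comm h)
        have h3 : f x - f y ≠ 0 := fun h0 => not_isUnit_zero (h0 ▸ h)
        have h4 : ¬ (f y = f x) := fun hh => h3 (by rw [hh, sub_self])
        simp only [if_pos h, if_neg h2, if_neg h3, if_neg h4]
        norm_num
      · have h2 : Quotient.mk (owSetoid R) (f y) = Quotient.mk (owSetoid R) (f x) :=
          owSetoid_mk_eq.2 (fun hu => h (isUnit_sub_comm hu))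
        by_cases h3 : f y = f x
        · have h4 : f x - f y = 0 := by rw [h3, sub_self]
          simp only [if_neg h, if_pos h2, if_pos h3, if_pos h4]
          norm_num
        · have h4 : f x - f y ≠ 0 :=
            fun h0 => h3 (by rw [sub_eq_zero] at h0; rw [h0])
          simp only [if_neg h, if_pos h2, if_neg h3, if_neg h4]
          norm_num
    rw [Finset.sum_congr rfl h1]
    simp only [Finset.sum_sub_distrib]
    rw [← Finset.mul_sum, Finset.sum_boole, Finset.sum_boole, Finset.sum_const,
      Finset.sum_const]
    simp only [nsmul_eq_mul, mul_one, hm, hM, hc]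
    push_cast
    ring
  have hS : ∑ x ∈ C, ∑ y ∈ C, overweight (f x - f y) = m ^ 2 + N - 2 * E := by
    rw [Finset.sum_congr rfl inner]
    simp only [Finset.sum_sub_distrib, Finset.sum_const, nsmul_eq_mul, ← Finset.mul_sum]
    rw [← hN, ← hE, ← hm]
    ring
  -- E as a sum of squares
  have hEa : E = ∑ a : R, c a ^ 2 := by
    rw [hE, ← Finset.sum_fiberwise' C f c]
    refine Finset.sum_congr rfl fun a _ => ?_
    rw [Finset.sum_const, nsmul_eq_mul, hc, sq]
  have hNa : N = ∑ t, M t ^ 2 := by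
    rw [hN, ← Finset.sum_fiberwise' C (fun x => Quotient.mk (owSetoid R) (f x)) M]
    refine Finset.sum_congr rfl fun t _ => ?_
    rw [Finset.sum_const, nsmul_eq_mul, hM, sq]
  -- M t as sum of c over its fiber
  have hMt : ∀ t, M t = ∑ a ∈ Finset.univ.filter
      (fun a => Quotient.mk (owSetoid R) a = t), c a := by
    intro t
    have hmaps : ∀ x ∈ C.filter (fun x => Quotient.mk (owSetoid R) (f x) = t),
        f x ∈ Finset.univ.filter (fun a => Quotient.mk (owSetoid R) a = t) := by
      intro x hx
      simp only [mem_filter, mem_univ, true_and]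
      exact (mem_filter.1 hx).2
    have h := Finset.sum_fiberwise_of_maps_to hmaps (fun _ => (1:ℝ))
    have hRHS : ∑ x ∈ C.filter (fun x => Quotient.mk (owSetoid R) (f x) = t),
        (1:ℝ) = M t := by rw [Finset.sum_const, nsmul_eq_mul, mul_one, hM]
    rw [hRHS] at h
    rw [← h]
    refine Finset.sum_congr rfl fun a ha => ?_
    have hat : Quotient.mk (owSetoid R) a = t := (mem_filter.1 ha).2
    rw [Finset.sum_const, nsmul_eq_mul, mul_one, hc, Finset.filter_filter]
    have hfeq : (C.filter fun x => Quotient.mk (owSetoid R) (f x) = t ∧ f x = a)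
        = C.filter fun x => f x = a := by
      apply Finset.filter_congr
      intro x _
      constructor
      · exact fun h' => h'.2
      · exact fun h' => ⟨by rw [h', hat], h'⟩
    rw [hfeq]
  -- Cauchy-Schwarz per fiber: N ≤ q * E
  have hqE : N ≤ q * E := by
    have step : ∀ t, M t ^ 2 ≤ q * ∑ a ∈ Finset.univ.filter
        (fun a => Quotient.mk (owSetoid R) a = t), c a ^ 2 := by
      intro t
      rw [hMt t]
      have := sq_sum_le_card_mul_sum_sq
        (s := Finset.univ.filter (fun a => Quotient.mk (owSetoid R) a = t)) (f := c)
      rwa [ow_fiber_card t, ← hqdef] at this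
    calc N = ∑ t, M t ^ 2 := hNa
      _ ≤ ∑ t, q * ∑ a ∈ Finset.univ.filter
          (fun a => Quotient.mk (owSetoid R) a = t), c a ^ 2 :=
        Finset.sum_le_sum fun t _ => step t
      _ = q * ∑ t, ∑ a ∈ Finset.univ.filter
          (fun a => Quotient.mk (owSetoid R) a = t), c a ^ 2 := by
        rw [Finset.mul_sum]
      _ = q * ∑ a : R, c a ^ 2 := by
        rw [Finset.sum_fiberwise Finset.univ (Quotient.mk (owSetoid R))
          (fun a => c a ^ 2)]
      _ = q * E := by rw [hEa]
  -- N ≤ m^2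
  have hNm : N ≤ m ^ 2 := by
    have h1 : ∀ x ∈ C, M (Quotient.mk (owSetoid R) (f x)) ≤ m := by
      intro x _
      simp only [hM, hm]
      exact_mod_cast Finset.card_filter_le C _
    calc N ≤ ∑ _x ∈ C, m := Finset.sum_le_sum h1
      _ = m ^ 2 := by rw [Finset.sum_const, nsmul_eq_mul, ← hm, sq]
  -- combine
  rw [hS]
  have h1 : N / q ≤ E := (div_le_iff₀ hq0).2 (by linarith [hqE])
  have h3 : 0 ≤ (m ^ 2 - N) * (1 - 2 / q) :=
    mul_nonneg (by linarith) (by rw [sub_nonneg, div_le_one hq0]; exact hq2)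
  have h4 : m ^ 2 + N - 2 * (N / q) ≤ m ^ 2 * (2 * (1 - 1 / q)) := by
    ring_nf at h3 ⊢
    linarith
  linarith

/-- Let `R` be a finite local ring whose maximal ideal `J = nonunits R` has at
least two elements, and set `η = 2(1 - 1/|J|)`. For a code `C ⊆ R^n` of minimum
overweight distance `d` we have
`|C|(|C|-1) d ≤ ∑_{x ∈ C} ∑_{y ∈ C} D(x,y) ≤ |C|^2 n η`. -/
theorem overweight_double_sum_bound {R : Type*} [Ring R] [Fintype R]
    [IsLocalRing R] {n : ℕ} (hJ : 2 ≤ (nonunits R).ncard) (η : ℝ)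
    (hη : η = 2 * (1 - 1 / ((nonunits R).ncard : ℝ)))
    (C : Finset (Fin n → R)) (d : ℝ)
    (hmin : ∀ x ∈ C, ∀ y ∈ C, x ≠ y → d ≤ owDist x y)
    (hex : ∃ x ∈ C, ∃ y ∈ C, x ≠ y ∧ owDist x y = d) :
    (C.card : ℝ) * ((C.card : ℝ) - 1) * d ≤ ∑ x ∈ C, ∑ y ∈ C, owDist x y ∧
    ∑ x ∈ C, ∑ y ∈ C, owDist x y ≤ (C.card : ℝ) ^ 2 * n * η := by
  classical
  constructor
  · -- lower bound
    have hx0 : ∀ x ∈ C, ((C.card : ℝ) - 1) * d ≤ ∑ y ∈ C, owDist x y := by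
      intro x hx
      have hsum : ∑ y ∈ C, owDist x y
          = (∑ y ∈ C.erase x, owDist x y) + owDist x x :=
        (Finset.sum_erase_add C _ hx).symm
      have hdiag : owDist x x = 0 := by
        simp [owDist, overweightN, overweight]
      have hlow : ((C.erase x).card : ℝ) * d ≤ ∑ y ∈ C.erase x, owDist x y := by
        have := Finset.card_nsmul_le_sum (C.erase x) (fun y => owDist x y) d
          (fun y hy => hmin x hx y (Finset.mem_of_mem_erase hy)
            (fun h => (Finset.ne_of_mem_erase hy) h.symm))
        simpa [nsmul_eq_mul] using this
      have hcard : ((C.erase x).card : ℝ) = (C.card : ℝ) - 1 := by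
        rw [Finset.card_erase_of_mem hx]
        have h1 : 1 ≤ C.card := Finset.card_pos.2 ⟨x, hx⟩
        push_cast [h1]
        ring
      rw [hsum, hdiag, add_zero]
      rw [hcard] at hlow
      exact hlow
    have hmain := Finset.card_nsmul_le_sum C _ (((C.card : ℝ) - 1) * d) hx0
    calc (C.card : ℝ) * ((C.card : ℝ) - 1) * d
        = C.card • (((C.card : ℝ) - 1) * d) := by rw [nsmul_eq_mul]; ring
      _ ≤ _ := hmain
  · -- upper bound
    have hsw : ∑ x ∈ C, ∑ y ∈ C, owDist x y
        = ∑ i : Fin n, ∑ x ∈ C, ∑ y ∈ C, overweight (x i - y i) := by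
      simp only [owDist, overweightN, Pi.sub_apply]
      calc ∑ x ∈ C, ∑ y ∈ C, ∑ i : Fin n, overweight (x i - y i)
          = ∑ x ∈ C, ∑ i : Fin n, ∑ y ∈ C, overweight (x i - y i) :=
            Finset.sum_congr rfl fun x _ => Finset.sum_comm
        _ = ∑ i : Fin n, ∑ x ∈ C, ∑ y ∈ C, overweight (x i - y i) :=
            Finset.sum_comm
    calc ∑ x ∈ C, ∑ y ∈ C, owDist x y
        = ∑ i : Fin n, ∑ x ∈ C, ∑ y ∈ C, overweight (x i - y i) := hsw
      _ ≤ ∑ _i : Fin n, (C.card : ℝ) ^ 2 * (2 * (1 - 1 / ((nonunits R).ncard : ℝ))) :=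
          Finset.sum_le_sum fun i _ => ow_key hJ C (fun v => v i)
      _ = (C.card : ℝ) ^ 2 * n * η := by
          rw [Finset.sum_const, Finset.card_univ, Fintype.card_fin, nsmul_eq_mul, hη]
          ring
end

section
/- Plotkin bound for the overweight distance: Let R be a finite local ring with maximal ideal J satisfying |J| ≥ 2, set η = 2(1 - 1/|J|), and let C ⊆ R^n be a (not necessarily linear) code of minimum overweight distance d. If d > n η, then |C| ≤ d / (d - n η). -/
section PlotkinAux
open Classical
set_option maxHeartbeats 1000000

private lemma pl_card_fib_left {R : Type*} [Ring R] [Fintype R] [IsLocalRing R] (u : R) :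
    (Finset.univ.filter (fun v => ¬ IsUnit (u - v))).card = (nonunits R).ncard := by
  rw [Set.ncard_eq_toFinset_card']
  apply Finset.card_bij (fun v _ => u - v)
  · intro v hv; simp at hv ⊢; exact hv
  · intro a _ b _ h; exact sub_right_injective h
  · intro a ha; refine ⟨u - a, ?_, sub_sub_cancel u a⟩; simp at ha ⊢; simpa using ha

private lemma pl_card_fib_right {R : Type*} [Ring R] [Fintype R] [IsLocalRing R] (v : R) :
    (Finset.univ.filter (fun u => ¬ IsUnit (u - v))).card = (nonunits R).ncard := by
  rw [Set.ncard_eq_toFinset_card']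
  apply Finset.card_bij (fun u _ => u - v)
  · intro u hu; simp at hu ⊢; exact hu
  · intro a _ b _ h; exact sub_left_injective h
  · intro a ha; refine ⟨a + v, ?_, add_sub_cancel_right a v⟩; simp at ha ⊢; simpa using ha

private lemma pl_key {R : Type*} [Ring R] [Fintype R] [IsLocalRing R] (c : R → ℝ) :
    ∑ u : R, ∑ v : R, (if IsUnit (u - v) then (0:ℝ) else c u * c v)
      ≤ (nonunits R).ncard * ∑ u : R, (c u)^2 := by
  have hA : ∀ (k : R → ℝ) (u : R), ∑ v : R, (if IsUnit (u - v) then (0:ℝ) else k u)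
      = (nonunits R).ncard * k u := by
    intro k u
    rw [Finset.sum_ite]
    simp [pl_card_fib_left u]
  have hB : ∀ (k : R → ℝ) (v : R), ∑ u : R, (if IsUnit (u - v) then (0:ℝ) else k v)
      = (nonunits R).ncard * k v := by
    intro k v
    rw [Finset.sum_ite]
    simp [pl_card_fib_right v]
  calc ∑ u : R, ∑ v : R, (if IsUnit (u - v) then (0:ℝ) else c u * c v)
      ≤ ∑ u : R, ∑ v : R, ((if IsUnit (u - v) then (0:ℝ) else c u^2/2)
          + (if IsUnit (u - v) then (0:ℝ) else c v^2/2)) := by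
        apply Finset.sum_le_sum; intro u _; apply Finset.sum_le_sum; intro v _
        split
        · simp
        · nlinarith [sq_nonneg (c u - c v)]
    _ = (∑ u : R, ∑ v : R, (if IsUnit (u - v) then (0:ℝ) else c u^2/2))
          + (∑ u : R, ∑ v : R, (if IsUnit (u - v) then (0:ℝ) else c v^2/2)) := by
        rw [← Finset.sum_add_distrib]
        exact Finset.sum_congr rfl fun u _ => Finset.sum_add_distrib
    _ = (∑ u : R, ((nonunits R).ncard * (c u^2/2)))
          + (∑ v : R, ((nonunits R).ncard * (c v^2/2))) := by
        have h1 : (∑ u : R, ∑ v : R, (if IsUnit (u - v) then (0:ℝ) else c u^2/2))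
            = (∑ u : R, ((nonunits R).ncard * (c u^2/2))) :=
          Finset.sum_congr rfl fun u _ => hA (fun u => c u^2/2) u
        have h2 : (∑ u : R, ∑ v : R, (if IsUnit (u - v) then (0:ℝ) else c v^2/2))
            = (∑ v : R, ((nonunits R).ncard * (c v^2/2))) := by
          rw [Finset.sum_comm]
          exact Finset.sum_congr rfl fun v _ => hB (fun v => c v^2/2) v
        rw [h1, h2]
    _ = (nonunits R).ncard * ∑ u : R, (c u)^2 := by
        rw [← Finset.mul_sum]
        have h2 : ∑ u : R, c u^2/2 = (∑ u : R, c u^2)/2 := by rw [Finset.sum_div]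
        rw [h2]; ring

private lemma pl_fiber {α R : Type*} [Fintype R] (C : Finset α) (g : α → R) (h : R → ℝ) :
    ∑ x ∈ C, h (g x) = ∑ v : R, ((C.filter (fun x => g x = v)).card : ℝ) * h v := by
  rw [← Finset.sum_fiberwise_of_maps_to (g := g) (t := Finset.univ) (fun x _ => Finset.mem_univ _)]
  apply Finset.sum_congr rfl
  intro v _
  rw [Finset.sum_congr rfl (fun x hx => by
    rw [(Finset.mem_filter.mp hx).2]), Finset.sum_const, nsmul_eq_mul]

private lemma pl_coord {R : Type*} [Ring R] [Fintype R] [IsLocalRing R]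
    {α : Type*} (C : Finset α) (g : α → R) (hJ : 2 ≤ (nonunits R).ncard) :
    ∑ x ∈ C, ∑ y ∈ C, overweight (g x - g y)
      ≤ (2 - 2/((nonunits R).ncard : ℝ)) * (C.card : ℝ)^2 := by
  set q : ℝ := ((nonunits R).ncard : ℝ) with hqdef
  have hq : (2:ℝ) ≤ q := by rw [hqdef]; exact_mod_cast hJ
  have hq0 : (0:ℝ) < q := by linarith
  set M : ℝ := (C.card : ℝ) with hMdef
  set c : R → ℝ := fun v => ((C.filter (fun x => g x = v)).card : ℝ) with hcdef
  have hw : ∀ a b : R, overweight (a - b)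
      = 1 + (if IsUnit (a - b) then (0:ℝ) else 1) - 2 * (if a = b then (1:ℝ) else 0) := by
    intro a b
    by_cases h0 : a = b
    · simp [overweight, h0, sub_self, isUnit_zero_iff]; norm_num
    · have hne : a - b ≠ 0 := sub_ne_zero_of_ne h0
      simp only [overweight, hne, if_false, h0]
      split <;> ring
  set P : ℝ := ∑ x ∈ C, ∑ y ∈ C, (if IsUnit (g x - g y) then (0:ℝ) else 1) with hPdef
  set E : ℝ := ∑ x ∈ C, ∑ y ∈ C, (if g x = g y then (1:ℝ) else 0) with hEdef
  have hsum : ∑ x ∈ C, ∑ y ∈ C, overweight (g x - g y) = M^2 + P - 2*E := by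
    have h1 : ∀ x ∈ C, ∑ y ∈ C, overweight (g x - g y)
        = ((∑ _y ∈ C, (1:ℝ)) + (∑ y ∈ C, if IsUnit (g x - g y) then (0:ℝ) else 1))
          - ∑ y ∈ C, 2 * (if g x = g y then (1:ℝ) else 0) := by
      intro x _
      rw [← Finset.sum_add_distrib, ← Finset.sum_sub_distrib]
      exact Finset.sum_congr rfl fun y _ => hw (g x) (g y)
    rw [Finset.sum_congr rfl h1, Finset.sum_sub_distrib, Finset.sum_add_distrib, hPdef, hEdef]
    simp only [Finset.sum_const, nsmul_eq_mul, mul_one, ← hMdef]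
    have h2 : ∑ x ∈ C, ∑ y ∈ C, 2 * (if g x = g y then (1:ℝ) else 0)
        = 2 * ∑ x ∈ C, ∑ y ∈ C, (if g x = g y then (1:ℝ) else 0) := by
      rw [Finset.mul_sum]
      exact Finset.sum_congr rfl fun x _ => (Finset.mul_sum _ _ _).symm
    rw [h2]; ring
  have hPfib : P = ∑ u : R, ∑ v : R, (if IsUnit (u - v) then (0:ℝ) else c u * c v) := by
    rw [hPdef]
    rw [pl_fiber C g (fun u => ∑ y ∈ C, (if IsUnit (u - g y) then (0:ℝ) else 1))]
    apply Finset.sum_congr rfl; intro u _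
    rw [pl_fiber C g (fun v => (if IsUnit (u - v) then (0:ℝ) else 1)), Finset.mul_sum]
    apply Finset.sum_congr rfl; intro v _
    rw [hcdef]
    split <;> simp <;> ring
  have hEfib : E = ∑ u : R, (c u)^2 := by
    rw [hEdef]
    rw [pl_fiber C g (fun u => ∑ y ∈ C, (if u = g y then (1:ℝ) else 0))]
    apply Finset.sum_congr rfl; intro u _
    rw [pl_fiber C g (fun v => (if u = v then (1:ℝ) else 0))]
    have : ∑ v : R, ((C.filter (fun x => g x = v)).card : ℝ) * (if u = v then (1:ℝ) else 0)
        = ((C.filter (fun x => g x = u)).card : ℝ) := by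
      rw [Finset.sum_eq_single u]
      · simp
      · intro b _ hb; simp [Ne.symm hb]
      · simp
    rw [this, hcdef]
    ring
  have hkey : P ≤ q * E := by
    rw [hPfib, hEfib]; exact pl_key c
  have hPM : P ≤ M^2 := by
    rw [hPdef]
    have hM2 : M^2 = ∑ _x ∈ C, ∑ _y ∈ C, (1:ℝ) := by
      simp only [Finset.sum_const, nsmul_eq_mul, mul_one, ← hMdef]; ring
    rw [hM2]
    apply Finset.sum_le_sum; intro x _; apply Finset.sum_le_sum; intro y _
    split <;> norm_num
  have hE0 : 0 ≤ E := by
    rw [hEfib]; exact Finset.sum_nonneg fun u _ => sq_nonneg _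
  rw [hsum]
  have hexpand : q * ((2 - 2/q) * M^2) = (2*q - 2) * M^2 := by
    field_simp
  have hgoal : q * (M^2 + P - 2*E) ≤ q * ((2 - 2/q) * M^2) := by
    rw [hexpand]
    nlinarith [hkey, hPM, mul_nonneg (by linarith : (0:ℝ) ≤ q - 2) (by linarith : (0:ℝ) ≤ M^2 - P)]
  exact le_of_mul_le_mul_left hgoal hq0

end PlotkinAux

open Classical
set_option maxHeartbeats 1000000 in
/-- Plotkin bound for the overweight distance: let `R` be a finite local ring
whose maximal ideal `J = nonunits R` has at least two elements, and set
`η = 2(1 - 1/|J|)`. If a code `C ⊆ R^n` has minimum overweight distance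
`d > n η`, then `|C| ≤ d / (d - n η)`. -/
theorem plotkin_overweight {R : Type*} [Ring R] [Fintype R]
    [IsLocalRing R] {n : ℕ} (hJ : 2 ≤ (nonunits R).ncard) (η : ℝ)
    (hη : η = 2 * (1 - 1 / ((nonunits R).ncard : ℝ)))
    (C : Finset (Fin n → R)) (d : ℝ)
    (hmin : ∀ x ∈ C, ∀ y ∈ C, x ≠ y → d ≤ owDist x y)
    (hex : ∃ x ∈ C, ∃ y ∈ C, x ≠ y ∧ owDist x y = d)
    (hd : d > n * η) :
    (C.card : ℝ) ≤ d / (d - n * η) := by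
  have hq : (2:ℝ) ≤ ((nonunits R).ncard : ℝ) := by exact_mod_cast hJ
  have hq0 : (0:ℝ) < ((nonunits R).ncard : ℝ) := by linarith
  have hη0 : 0 ≤ η := by
    have h1q : 1 / ((nonunits R).ncard : ℝ) ≤ 1 := by
      rw [div_le_one hq0]; linarith
    rw [hη]; linarith
  have hnη0 : 0 ≤ (n:ℝ) * η := mul_nonneg (Nat.cast_nonneg n) hη0
  have hdpos : 0 < d - (n:ℝ) * η := by linarith
  by_cases hC0 : C.card = 0
  · rw [hC0]
    push_cast
    exact div_nonneg (by linarith) (le_of_lt hdpos)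
  have hM1 : (1:ℝ) ≤ (C.card : ℝ) := by
    have := Nat.one_le_iff_ne_zero.mpr hC0
    exact_mod_cast this
  set M : ℝ := (C.card : ℝ) with hMdef
  -- lower bound on the double sum
  have howx : ∀ x : Fin n → R, owDist x x = 0 := by
    intro x; simp [owDist, overweightN, overweight]
  have hrow : ∀ x ∈ C, d * (M - 1) ≤ ∑ y ∈ C, owDist x y := by
    intro x hx
    have h1 : 1 ≤ C.card := Nat.one_le_iff_ne_zero.mpr hC0
    have hcarderase : ((C.erase x).card : ℝ) = M - 1 := by
      rw [Finset.card_erase_of_mem hx, Nat.cast_sub h1, Nat.cast_one]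
    have hsplit : ∑ y ∈ C, owDist x y = ∑ y ∈ C.erase x, owDist x y + owDist x x :=
      (Finset.sum_erase_add C _ hx).symm
    rw [hsplit, howx x, add_zero]
    calc d * (M - 1) = ∑ _y ∈ C.erase x, d := by
          rw [Finset.sum_const, nsmul_eq_mul, hcarderase, mul_comm]
      _ ≤ ∑ y ∈ C.erase x, owDist x y :=
          Finset.sum_le_sum fun y hy =>
            hmin x hx y (Finset.mem_of_mem_erase hy)
              (fun h => (Finset.ne_of_mem_erase hy) h.symm)
  have hlow : d * (M * (M - 1)) ≤ ∑ x ∈ C, ∑ y ∈ C, owDist x y := by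
    calc d * (M * (M - 1)) = ∑ _x ∈ C, d * (M - 1) := by
          rw [Finset.sum_const, nsmul_eq_mul, ← hMdef]; ring
      _ ≤ ∑ x ∈ C, ∑ y ∈ C, owDist x y := Finset.sum_le_sum hrow
  -- upper bound on the double sum
  have hswap : ∑ x ∈ C, ∑ y ∈ C, owDist x y
      = ∑ i : Fin n, ∑ x ∈ C, ∑ y ∈ C, overweight (x i - y i) := by
    simp only [owDist, overweightN, Pi.sub_apply]
    calc ∑ x ∈ C, ∑ y ∈ C, ∑ i : Fin n, overweight (x i - y i)
        = ∑ x ∈ C, ∑ i : Fin n, ∑ y ∈ C, overweight (x i - y i) :=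
          Finset.sum_congr rfl fun x _ => Finset.sum_comm
      _ = ∑ i : Fin n, ∑ x ∈ C, ∑ y ∈ C, overweight (x i - y i) := Finset.sum_comm
  have hup : ∑ x ∈ C, ∑ y ∈ C, owDist x y
      ≤ (n:ℝ) * ((2 - 2/((nonunits R).ncard : ℝ)) * M^2) := by
    rw [hswap]
    calc ∑ i : Fin n, ∑ x ∈ C, ∑ y ∈ C, overweight (x i - y i)
        ≤ ∑ _i : Fin n, (2 - 2/((nonunits R).ncard : ℝ)) * M^2 :=
          Finset.sum_le_sum fun i _ => pl_coord C (fun x => x i) hJ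
      _ = (n:ℝ) * ((2 - 2/((nonunits R).ncard : ℝ)) * M^2) := by
          rw [Finset.sum_const, Finset.card_univ, Fintype.card_fin, nsmul_eq_mul]
  have hηeq : (2 - 2/((nonunits R).ncard : ℝ)) = η := by rw [hη]; ring
  rw [hηeq] at hup
  have hcomb : d * (M * (M - 1)) ≤ (n:ℝ) * (η * M^2) := le_trans hlow hup
  rw [le_div_iff₀ hdpos]
  nlinarith [hcomb, hM1, hd, mul_pos (lt_of_lt_of_le one_pos hM1) hdpos]
end

section
/- Plotkin bound (distance form) for the overweight: Let R be a finite local ring with maximal ideal J satisfying |J| ≥ 2, set η = 2(1 - 1/|J|), and let C ⊆ R^n be a (not necessarily linear) code with |C| ≥ 2 and minimum overweight distance d. Then d ≤ |C| n η / (|C| - 1). -/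
section Aux

open Finset

lemma myNonunitsAdd {R : Type*} [Ring R] [IsLocalRing R] {a b : R}
    (ha : a ∈ nonunits R) (hb : b ∈ nonunits R) : a + b ∈ nonunits R := by
  rintro ⟨u, hu⟩
  have h1 : (↑u⁻¹ * a) + (↑u⁻¹ * b) = 1 := by
    rw [← mul_add, ← hu, ← Units.val_mul, inv_mul_cancel, Units.val_one]
  rcases IsLocalRing.isUnit_or_isUnit_of_add_one h1 with h | h
  · exact ha (by simpa [← mul_assoc] using (u.isUnit.mul h))
  · exact hb (by simpa [← mul_assoc] using (u.isUnit.mul h))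

/-- The nonunits of a local ring as an additive subgroup. -/
def Jsub (R : Type*) [Ring R] [IsLocalRing R] : AddSubgroup R where
  carrier := nonunits R
  zero_mem' := by
    simp only [Set.mem_setOf_eq, mem_nonunits_iff]
    exact not_isUnit_zero
  add_mem' := myNonunitsAdd
  neg_mem' := by
    intro x hx H
    exact hx (by simpa using H.neg)

open Classical in
lemma count_pairs {α β : Type*} [Fintype β] (C : Finset α) (f : α → β) :
    ∑ b : β, (∑ x ∈ C, if f x = b then (1:ℝ) else 0) ^ 2
      = ∑ x ∈ C, ∑ y ∈ C, (if f x = f y then (1:ℝ) else 0) := by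
  have key : ∀ a b : α, ∑ v : β, (if f a = v then (1:ℝ) else 0) * (if f b = v then 1 else 0)
      = if f a = f b then 1 else 0 := by
    intro a b
    rw [Finset.sum_eq_single (f a)]
    · simp [eq_comm]
    · intro v _ hv
      have hne : f a ≠ v := fun h => hv h.symm
      simp [hne]
    · intro h; exact absurd (Finset.mem_univ _) h
  calc ∑ b : β, (∑ x ∈ C, if f x = b then (1:ℝ) else 0) ^ 2
      = ∑ v : β, ∑ x ∈ C, ∑ y ∈ C,
          (if f x = v then (1:ℝ) else 0) * (if f y = v then 1 else 0) := by
        refine Finset.sum_congr rfl fun v _ => ?_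
        rw [sq, Finset.sum_mul_sum]
    _ = ∑ x ∈ C, ∑ y ∈ C, ∑ v : β,
          (if f x = v then (1:ℝ) else 0) * (if f y = v then 1 else 0) := by
        rw [Finset.sum_comm]
        exact Finset.sum_congr rfl fun x _ => Finset.sum_comm
    _ = _ := Finset.sum_congr rfl fun x _ => Finset.sum_congr rfl fun y _ => key x y

open Classical in
/-- key per-coordinate bound -/
lemma key_coord {α R : Type*} [Ring R] [Fintype R] [IsLocalRing R]
    (hJ : 2 ≤ (nonunits R).ncard) (C : Finset α) (g : α → R) :
    ∑ x ∈ C, ∑ y ∈ C, overweight (g x - g y)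
      ≤ 2 * (1 - 1 / ((nonunits R).ncard : ℝ)) * (C.card : ℝ) ^ 2 := by
  set s : ℝ := ((nonunits R).ncard : ℝ) with hs
  have hs2 : (2:ℝ) ≤ s := by rw [hs]; exact_mod_cast hJ
  have hs0 : (0:ℝ) < s := by linarith
  set Q := R ⧸ Jsub R
  letI instQ : Fintype Q := Fintype.ofFinite _
  set π : R → Q := QuotientAddGroup.mk with hπ
  have hmem : ∀ a b : R, π a = π b ↔ a - b ∈ nonunits R := by
    intro a b
    exact QuotientAddGroup.eq_iff_sub_mem
  -- pointwise identity for overweight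
  have hW : ∀ a b : R, overweight (a - b)
      = 2 - 2 * (if a = b then (1:ℝ) else 0) - (1 - (if π a = π b then (1:ℝ) else 0)) := by
    intro a b
    by_cases h0 : a = b
    · have : a - b = 0 := by rw [h0, sub_self]
      simp [overweight, this, h0]
    · have hab : a - b ≠ 0 := sub_ne_zero.2 h0
      by_cases hu : IsUnit (a - b)
      · have hne : π a ≠ π b := fun h => ((hmem a b).1 h) hu
        norm_num [overweight, hab, hu, h0, hne]
      · have heq : π a = π b := (hmem a b).2 hu
        norm_num [overweight, hab, hu, h0, heq]
  set M : ℝ := (C.card : ℝ) with hM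
  set F : R → ℝ := fun v => ∑ x ∈ C, if g x = v then (1:ℝ) else 0 with hF
  set G : Q → ℝ := fun c => ∑ x ∈ C, if π (g x) = c then (1:ℝ) else 0 with hG
  have hFnn : ∀ v, 0 ≤ F v := fun v => Finset.sum_nonneg fun x _ => by positivity
  have hGnn : ∀ c, 0 ≤ G c := fun c => Finset.sum_nonneg fun x _ => by positivity
  set E : ℝ := ∑ v : R, F v ^ 2 with hE
  set P : ℝ := ∑ c : Q, G c ^ 2 with hP
  -- E and P as pair counts
  have hEpairs : E = ∑ x ∈ C, ∑ y ∈ C, (if g x = g y then (1:ℝ) else 0) := count_pairs C g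
  have hPpairs : P = ∑ x ∈ C, ∑ y ∈ C, (if π (g x) = π (g y) then (1:ℝ) else 0) := by
    rw [hP]
    simp only [hG]
    have h := @count_pairs _ _ instQ C (fun x => π (g x))
    convert h using 5
  -- G c is the fiberwise sum of F
  have hGfib : ∀ c : Q, G c = ∑ v ∈ Finset.univ.filter (fun v => π v = c), F v := by
    intro c
    rw [hG, Finset.sum_comm]
    refine Finset.sum_congr rfl fun x _ => ?_
    simp [Finset.sum_ite_eq, Finset.sum_ite_eq', Finset.mem_filter]
  -- each fiber has cardinality s
  have hfibcard : ∀ c : Q, ((Finset.univ.filter (fun v => π v = c)).card : ℝ) = s := by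
    intro c
    obtain ⟨w, rfl⟩ := Quotient.exists_rep c
    have : (Finset.univ.filter (fun v => π v = π w)).card = (nonunits R).ncard := by
      rw [Set.ncard_eq_toFinset_card']
      apply Finset.card_nbij' (fun v => v - w) (fun v => v + w)
      · intro v hv
        simp only [Finset.mem_coe, Finset.mem_filter, Finset.mem_univ, true_and] at hv
        rw [Finset.mem_coe, Set.mem_toFinset]
        exact (hmem v w).1 hv
      · intro v hv
        rw [Finset.mem_coe, Set.mem_toFinset] at hv
        simp only [Finset.mem_coe, Finset.mem_filter, Finset.mem_univ, true_and]
        rw [hmem]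
        simpa using hv
      · intro v _; simp
      · intro v _; simp
    rw [this]
  -- Cauchy-Schwarz per fiber, summed
  have hCS : P ≤ s * E := by
    have h1 : ∀ c : Q, G c ^ 2 ≤ s * ∑ v ∈ Finset.univ.filter (fun v => π v = c), F v ^ 2 := by
      intro c
      rw [hGfib c, ← hfibcard c]
      exact sq_sum_le_card_mul_sum_sq
    calc P ≤ ∑ c : Q, s * ∑ v ∈ Finset.univ.filter (fun v => π v = c), F v ^ 2 :=
          Finset.sum_le_sum fun c _ => h1 c
      _ = s * ∑ c : Q, ∑ v ∈ Finset.univ.filter (fun v => π v = c), F v ^ 2 := by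
          rw [Finset.mul_sum]
      _ = s * E := by rw [hE, Finset.sum_fiberwise]
  -- sum of G is M
  have hGsum : ∑ c : Q, G c = M := by
    simp only [hG]
    rw [Finset.sum_comm]
    have h1 : ∀ x ∈ C, (∑ c : Q, if π (g x) = c then (1:ℝ) else 0) = 1 := by
      intro x _
      rw [Finset.sum_eq_single (π (g x))]
      · simp
      · intro b _ hb; simp [Ne.symm hb]
      · simp
    calc ∑ x ∈ C, ∑ c : Q, (if π (g x) = c then (1:ℝ) else 0)
        = ∑ _x ∈ C, (1:ℝ) := Finset.sum_congr rfl h1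
      _ = M := by rw [Finset.sum_const, nsmul_eq_mul, mul_one, hM]
  have hPM : P ≤ M ^ 2 := by
    calc P ≤ (∑ c : Q, G c) ^ 2 := Finset.sum_sq_le_sq_sum_of_nonneg fun c _ => hGnn c
      _ = M ^ 2 := by rw [hGsum]
  -- main computation
  have hsum : ∑ x ∈ C, ∑ y ∈ C, overweight (g x - g y) = M ^ 2 + P - 2 * E := by
    have expand : ∑ x ∈ C, ∑ y ∈ C, overweight (g x - g y)
        = ∑ x ∈ C, ∑ y ∈ C, (2 - 2 * (if g x = g y then (1:ℝ) else 0)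
            - (1 - (if π (g x) = π (g y) then (1:ℝ) else 0))) :=
      Finset.sum_congr rfl fun x _ => Finset.sum_congr rfl fun y _ => hW (g x) (g y)
    rw [expand]
    simp only [Finset.sum_sub_distrib, ← Finset.mul_sum]
    rw [← hEpairs, ← hPpairs]
    simp only [Finset.sum_const, nsmul_eq_mul]
    rw [hM]
    ring
  rw [hsum]
  have hEP : P / s ≤ E := by
    rw [div_le_iff₀ hs0]
    calc P ≤ s * E := hCS
      _ = E * s := mul_comm _ _
  have h1s : 0 ≤ 1 - 2 / s := by
    rw [sub_nonneg, div_le_one hs0]; exact hs2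
  have step1 : M ^ 2 + P - 2 * E ≤ M ^ 2 + (1 - 2 / s) * P := by
    have : 2 * (P / s) ≤ 2 * E := by linarith
    have h2 : 2 * (P / s) = (2 / s) * P := by ring
    nlinarith [hEP]
  have step2 : M ^ 2 + (1 - 2 / s) * P ≤ M ^ 2 + (1 - 2 / s) * M ^ 2 := by
    have := mul_le_mul_of_nonneg_left hPM h1s
    linarith
  have final : M ^ 2 + (1 - 2 / s) * M ^ 2 = 2 * (1 - 1 / s) * M ^ 2 := by
    field_simp
    ring
  calc M ^ 2 + P - 2 * E ≤ M ^ 2 + (1 - 2 / s) * P := step1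
    _ ≤ M ^ 2 + (1 - 2 / s) * M ^ 2 := step2
    _ = 2 * (1 - 1 / s) * M ^ 2 := final

end Aux

/-- Plotkin bound (distance form) for the overweight: let `R` be a finite local
ring whose maximal ideal `J = nonunits R` has at least two elements, and set
`η = 2(1 - 1/|J|)`. If a code `C ⊆ R^n` has `|C| ≥ 2` and minimum overweight
distance `d`, then `d ≤ |C| n η / (|C| - 1)`. -/
theorem plotkin_overweight_distance_form {R : Type*} [Ring R] [Fintype R]
    [IsLocalRing R] {n : ℕ} (hJ : 2 ≤ (nonunits R).ncard) (η : ℝ)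
    (hη : η = 2 * (1 - 1 / ((nonunits R).ncard : ℝ)))
    (C : Finset (Fin n → R)) (hC : 2 ≤ C.card) (d : ℝ)
    (hmin : ∀ x ∈ C, ∀ y ∈ C, x ≠ y → d ≤ owDist x y)
    (hex : ∃ x ∈ C, ∃ y ∈ C, x ≠ y ∧ owDist x y = d) :
    d ≤ (C.card : ℝ) * n * η / ((C.card : ℝ) - 1) := by
  classical
  set M : ℝ := (C.card : ℝ) with hM
  have hM2 : (2:ℝ) ≤ M := by rw [hM]; exact_mod_cast hC
  have hM1 : (0:ℝ) < M - 1 := by linarith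
  have hM0 : (0:ℝ) < M := by linarith
  set S : ℝ := ∑ x ∈ C, ∑ y ∈ C, owDist x y with hS
  -- upper bound on S
  have hupper : S ≤ n * (η * M ^ 2) := by
    have hswap : S = ∑ i : Fin n, ∑ x ∈ C, ∑ y ∈ C, overweight (x i - y i) := by
      have h1 : ∀ x ∈ C, ∑ y ∈ C, owDist x y
          = ∑ i : Fin n, ∑ y ∈ C, overweight (x i - y i) := by
        intro x _
        rw [Finset.sum_comm]
        exact Finset.sum_congr rfl fun y _ => rfl
      rw [hS, Finset.sum_congr rfl h1]
      exact Finset.sum_comm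
    rw [hswap]
    calc ∑ i : Fin n, ∑ x ∈ C, ∑ y ∈ C, overweight (x i - y i)
        ≤ ∑ _i : Fin n, 2 * (1 - 1 / ((nonunits R).ncard : ℝ)) * M ^ 2 :=
          Finset.sum_le_sum fun i _ => key_coord hJ C (fun x => x i)
      _ = n * (η * M ^ 2) := by
          rw [Finset.sum_const, Finset.card_univ, Fintype.card_fin, nsmul_eq_mul, hη]
  -- lower bound on S
  have hdiag : ∀ x : Fin n → R, owDist x x = 0 := by
    intro x
    simp [owDist, overweightN, overweight]
  have hlower : d * (M * (M - 1)) ≤ S := by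
    have h1 : ∀ x ∈ C, d * (M - 1) ≤ ∑ y ∈ C, owDist x y := by
      intro x hx
      have : ∑ y ∈ C, owDist x y = ∑ y ∈ C.erase x, owDist x y := by
        rw [← Finset.add_sum_erase C _ hx, hdiag, zero_add]
      rw [this]
      have hcard : ((C.erase x).card : ℝ) = M - 1 := by
        rw [Finset.card_erase_of_mem hx]
        have : 1 ≤ C.card := le_trans one_le_two hC
        push_cast [this]
        rfl
      calc d * (M - 1) = ((C.erase x).card : ℝ) * d := by rw [hcard]; ring
        _ = ∑ _y ∈ C.erase x, d := by rw [Finset.sum_const, nsmul_eq_mul]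
        _ ≤ ∑ y ∈ C.erase x, owDist x y :=
            Finset.sum_le_sum fun y hy =>
              hmin x hx y (Finset.mem_of_mem_erase hy)
                (fun h => (Finset.ne_of_mem_erase hy) h.symm)
    calc d * (M * (M - 1)) = M * (d * (M - 1)) := by ring
      _ = ∑ _x ∈ C, d * (M - 1) := by rw [Finset.sum_const, nsmul_eq_mul]
      _ ≤ S := Finset.sum_le_sum h1
  -- combine
  rw [le_div_iff₀ hM1]
  have key : d * (M * (M - 1)) ≤ n * (η * M ^ 2) := le_trans hlower hupper
  have : d * (M - 1) * M ≤ M * n * η * M := by nlinarith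
  exact le_of_mul_le_mul_right this hM0
end

section
/- Johnson bound (key estimate): Let n be a positive integer, γ > 0, d > 0 real numbers, and let e, N be real numbers with 0 ≤ e. Suppose N(N-1)·(d/2) ≤ N²·e - N²·e²/(2γn), so that N·(dγn - 2eγn + e²) ≤ dγn. If either (i) γn(d - γn) ≥ 1, or (ii) e/n ≤ γ - √((γ - d/n)·γ + 1/n²) (the expression under the square root being nonnegative), then N ≤ dγn. -/
/-- Arithmetic core of the Johnson bound: if
`N(N-1)(d/2) ≤ N²e - N²e²/(2γn)`, so that `N(dγn - 2eγn + e²) ≤ dγn`, and if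
either `γn(d - γn) ≥ 1` or `e/n ≤ γ - √((γ - d/n)γ + 1/n²)` (with a
nonnegative radicand), then `N ≤ dγn`. -/
theorem johnson_key_estimate (n : ℕ) (hn : 0 < n) (γ d e N : ℝ)
    (hγ : 0 < γ) (hd : 0 < d) (he : 0 ≤ e)
    (h1 : N * (N - 1) * (d / 2) ≤ N ^ 2 * e - N ^ 2 * e ^ 2 / (2 * γ * n))
    (h2 : N * (d * γ * n - 2 * e * γ * n + e ^ 2) ≤ d * γ * n)
    (hcond : γ * n * (d - γ * n) ≥ 1 ∨
      (0 ≤ (γ - d / n) * γ + 1 / (n : ℝ) ^ 2 ∧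
        e / n ≤ γ - Real.sqrt ((γ - d / n) * γ + 1 / (n : ℝ) ^ 2))) :
    N ≤ d * γ * n := by

  have hn' : (0:ℝ) < n := by exact_mod_cast hn
  have hdγn : 0 < d * γ * n := by positivity
  rcases le_or_gt N 0 with hN | hN
  · linarith
  · have key : 1 ≤ d * γ * n - 2 * e * γ * n + e ^ 2 := by
      rcases hcond with h | ⟨hR, he2⟩
      · nlinarith [sq_nonneg (γ * (n:ℝ) - e)]
      · set R := (γ - d / n) * γ + 1 / (n : ℝ) ^ 2 with hRdef
        have hs0 : 0 ≤ Real.sqrt R := Real.sqrt_nonneg R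
        have hs2 : Real.sqrt R ^ 2 = R := Real.sq_sqrt hR
        have he3 : e ≤ γ * n - n * Real.sqrt R := by
          have := (div_le_iff₀ hn').mp he2
          nlinarith
        have h4 : 0 ≤ γ * n - e := by nlinarith
        have h5 : (n * Real.sqrt R) ^ 2 ≤ (γ * n - e) ^ 2 :=
          pow_le_pow_left₀ (by positivity) (by linarith) 2
        have h6 : (n : ℝ) ^ 2 * R = γ ^ 2 * n ^ 2 - d * γ * n + 1 := by
          rw [hRdef]; field_simp
        nlinarith
    nlinarith
end
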